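/- Let Λ : ℝ → [0,1] be decreasing and not constantly 0. Then ΛVaR, defined by ΛVaR(X) = inf{x ∈ ℝ : P(X ≤ x) ≥ Λ(x)}, is cash subadditive: ΛVaR(X + c) ≤ ΛVaR(X) + c for all c ≥ 0 and all bounded X. -/
import Mathlib


open MeasureTheory

variable {Ω : Type*} [MeasurableSpace Ω]

/-- `ΛVaR(X) = inf {x ∈ ℝ : P(X ≤ x) ≥ Λ(x)}`. -/
noncomputable def LVaR (μ : Measure Ω) (Λ : ℝ → ℝ) (X : Ω → ℝ) : ℝ :=
  sInf {x : ℝ | Λ x ≤ (μ {ω | X ω ≤ x}).toReal}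

/-- For a decreasing `Λ : ℝ → [0,1]` not identically `0`, `ΛVaR` is cash
subadditive: `ΛVaR(X + c) ≤ ΛVaR(X) + c` for all `c ≥ 0` and bounded `X`. -/
theorem LVaR_cashSubadditive (μ : Measure Ω) [IsProbabilityMeasure μ]
    (Λ : ℝ → ℝ) (hΛ : Antitone Λ) (hΛ01 : ∀ x, Λ x ∈ Set.Icc (0 : ℝ) 1)
    (hΛne : ∃ x, Λ x ≠ 0)
    (X : Ω → ℝ) (hX : Measurable X) (hb : ∃ M, ∀ ω, |X ω| ≤ M)
    (c : ℝ) (hc : 0 ≤ c) :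
    LVaR μ Λ (fun ω => X ω + c) ≤ LVaR μ Λ X + c := by
  obtain ⟨M, hM⟩ := hb
  obtain ⟨x0, hx0⟩ := hΛne
  have hx0pos : 0 < Λ x0 := lt_of_le_of_ne (hΛ01 x0).1 (Ne.symm hx0)
  set S : Set ℝ := {x : ℝ | Λ x ≤ (μ {ω | X ω ≤ x}).toReal} with hS
  set S' : Set ℝ := {x : ℝ | Λ x ≤ (μ {ω | X ω + c ≤ x}).toReal} with hS'
  -- S is nonempty
  have hSne : S.Nonempty := by
    refine ⟨M, ?_⟩
    have : {ω | X ω ≤ M} = Set.univ := by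
      ext ω; simp [le_of_abs_le (hM ω)]
    simp only [hS, Set.mem_setOf_eq, this, measure_univ, ENNReal.toReal_one]
    exact (hΛ01 M).2
  -- S' is bounded below
  have hS'bdd : BddBelow S' := by
    refine ⟨min x0 (c - M), ?_⟩
    intro x hx
    by_contra hlt
    push_neg at hlt
    have hxx0 : x < x0 := lt_of_lt_of_le hlt (min_le_left _ _)
    have hxcM : x < c - M := lt_of_lt_of_le hlt (min_le_right _ _)
    have hempty : {ω | X ω + c ≤ x} = ∅ := by
      ext ω
      simp only [Set.mem_setOf_eq, Set.mem_empty_iff_false, iff_false, not_le]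
      have := neg_le_of_abs_le (hM ω)
      linarith
    have : Λ x ≤ 0 := by simpa [hS', hempty] using hx
    have := hΛ (le_of_lt hxx0)
    linarith
  -- key: x ∈ S → x + c ∈ S'
  have hkey : ∀ x ∈ S, x + c ∈ S' := by
    intro x hx
    have hsets : {ω | X ω + c ≤ x + c} = {ω | X ω ≤ x} := by
      ext ω; simp
    have : Λ (x + c) ≤ Λ x := hΛ (by linarith)
    simp only [hS', Set.mem_setOf_eq, hsets]
    exact le_trans this hx
  -- conclude
  have h1 : ∀ x ∈ S, LVaR μ Λ (fun ω => X ω + c) ≤ x + c := fun x hx =>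
    csInf_le hS'bdd (hkey x hx)
  have h2 : LVaR μ Λ (fun ω => X ω + c) - c ≤ LVaR μ Λ X :=
    le_csInf hSne (fun x hx => by linarith [h1 x hx])
  linarith
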